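/- arXiv:1508.04577 — 3 statements merged into one kernel-verified Lean document; each statement's English description precedes it below -/
import Mathlib

section
/- Let d > 0, ω ∈ ℝ with d·ω ≤ 1, and κ > 0. If ψ : [0,d] → ℂ is twice differentiable, satisfies ψ″(x) = κ²·ψ(x) for all x ∈ [0,d], and satisfies the boundary conditions ψ′(0) = ψ′(d) = ω·(ψ(d) − ψ(0)), then ψ is identically zero on [0,d]. (The one-dimensional Schrödinger operator with a point δ′-interaction of strength ω on a loop of length d has no negative eigenvalues when d·ω ≤ 1.) -/
open Set

lemma const_aux {f : ℝ → ℂ} {d : ℝ}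
    (hf : ∀ x ∈ Set.Icc (0:ℝ) d, HasDerivWithinAt f 0 (Set.Icc 0 d) x) :
    ∀ x ∈ Set.Icc (0:ℝ) d, f x = f 0 := by
  apply constant_of_has_deriv_right_zero
  · exact fun x hx => (hf x hx).continuousWithinAt
  · intro x hx
    exact (hf x (Set.mem_Icc_of_Ico hx)).mono_of_mem_nhdsWithin (Icc_mem_nhdsGE_of_mem hx)

lemma key_ineq {t : ℝ} (ht : 0 < t) : 2 * (Real.exp t - 1) < t * (Real.exp t + 1) := by
  rcases le_or_gt 2 t with h2 | h2
  · nlinarith [Real.exp_pos t]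
  · set s : ℝ := t / 2 with hs
    have hs0 : 0 < s := by positivity
    have hs1 : s < 1 := by rw [hs]; linarith
    have habs : |(-s)| ≤ 1 := by rw [abs_neg, abs_of_pos hs0]; linarith
    have hb := Real.exp_bound habs (n := 4) (by norm_num)
    have hsum : ∑ m ∈ Finset.range 4, (-s) ^ m / (m.factorial : ℝ)
        = 1 - s + s ^ 2 / 2 - s ^ 3 / 6 := by
      simp [Finset.sum_range_succ, Nat.factorial]
      ring
    rw [hsum] at hb
    rw [abs_neg, abs_of_pos hs0] at hb
    norm_num [Nat.factorial] at hb
    have hexp : 1 - s + s ^ 2 / 2 - s ^ 3 / 6 - 5 / 96 * s ^ 4 ≤ Real.exp (-s) := by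
      have h := (abs_le.1 hb).1
      linarith
    have hle : (0:ℝ) ≤ 1 - s := by linarith
    have hL0 : 0 < 1 - s + s ^ 2 / 2 - s ^ 3 / 6 - 5 / 96 * s ^ 4 := by
      nlinarith [mul_nonneg (sq_nonneg s) hle, mul_nonneg (mul_nonneg (sq_nonneg s) hs0.le) hle,
        sq_nonneg s]
    have hu0 : 0 < Real.exp (-s) := Real.exp_pos _
    have huv : Real.exp t * Real.exp (-s) ^ 2 = 1 := by
      have h1 : Real.exp (-s) ^ 2 = Real.exp (-s) * Real.exp (-s) := by ring
      rw [h1, ← Real.exp_add, ← Real.exp_add,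
        show t + (-s + -s) = 0 from by rw [hs]; ring, Real.exp_zero]
    have hqpos : 0 < 2/3 - 41/48*s + 5/12*s^2 - 25/288*s^3 - 1/144*s^4
        + 185/9216*s^5 + 25/9216*s^6 := by
      nlinarith [sq_nonneg s, sq_nonneg (1 - s), pow_pos hs0 3, pow_pos hs0 4,
        pow_pos hs0 5, pow_pos hs0 6, mul_pos hs0 hs0]
    have hpoly : 1 - s <
        (1 + s) * (1 - s + s ^ 2 / 2 - s ^ 3 / 6 - 5 / 96 * s ^ 4) ^ 2 := by
      nlinarith [mul_pos (pow_pos hs0 3) hqpos]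
    have hq : 1 - s < (1 + s) * Real.exp (-s) ^ 2 := by
      nlinarith [mul_le_mul hexp hexp hL0.le hu0.le]
    have he : 0 < Real.exp t := Real.exp_pos t
    have hst : t = 2 * s := by rw [hs]; ring
    nlinarith [mul_lt_mul_of_pos_left hq he]

/-- If d·ω ≤ 1 and κ > 0, any twice differentiable ψ on [0,d] solving ψ″ = κ²ψ with the
δ′-boundary conditions ψ′(0) = ψ′(d) = ω·(ψ(d) − ψ(0)) vanishes identically on [0,d]:
the point δ′-interaction on a loop of length d has no negative eigenvalues when d·ω ≤ 1. -/
theorem stmt_1 (d ω κ : ℝ) (hd : 0 < d) (hω : d * ω ≤ 1) (hκ : 0 < κ)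
    (ψ ψ' ψ'' : ℝ → ℂ)
    (hder1 : ∀ x ∈ Set.Icc (0 : ℝ) d, HasDerivWithinAt ψ (ψ' x) (Set.Icc 0 d) x)
    (hder2 : ∀ x ∈ Set.Icc (0 : ℝ) d, HasDerivWithinAt ψ' (ψ'' x) (Set.Icc 0 d) x)
    (hode : ∀ x ∈ Set.Icc (0 : ℝ) d, ψ'' x = (κ : ℂ) ^ 2 * ψ x)
    (hbc0 : ψ' 0 = (ω : ℂ) * (ψ d - ψ 0))
    (hbcd : ψ' d = (ω : ℂ) * (ψ d - ψ 0)) :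
    ∀ x ∈ Set.Icc (0 : ℝ) d, ψ x = 0 := by
  have hexp1 : ∀ (c x : ℝ), HasDerivAt (fun y : ℝ => Complex.exp ((c:ℂ) * (y:ℝ)))
      ((c:ℂ) * Complex.exp ((c:ℂ) * (x:ℝ))) x := by
    intro c x
    have h : HasDerivAt (fun z : ℂ => Complex.exp ((c:ℂ) * z))
        ((c:ℂ) * Complex.exp ((c:ℂ) * (x:ℂ))) (x:ℂ) := by
      have := ((hasDerivAt_id ((x:ℝ):ℂ)).const_mul (c:ℂ)).cexp
      refine this.congr_deriv ?_
      simp only [id_eq]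
      ring
    exact h.comp_ofReal
  -- the two first-order combinations
  have hg : ∀ x ∈ Set.Icc (0:ℝ) d, HasDerivWithinAt
      (fun y : ℝ => Complex.exp (((-κ:ℝ):ℂ) * (y:ℝ)) * (ψ' y + (κ:ℂ) * ψ y)) 0
      (Set.Icc 0 d) x := by
    intro x hx
    have h1 := (hexp1 (-κ) x).hasDerivWithinAt (s := Set.Icc (0:ℝ) d)
    have h2 := (hder2 x hx).add ((hder1 x hx).const_mul (κ:ℂ))
    have := h1.mul h2
    refine this.congr_deriv ?_
    rw [hode x hx]
    simp only [Pi.add_apply]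
    push_cast
    ring
  have hf : ∀ x ∈ Set.Icc (0:ℝ) d, HasDerivWithinAt
      (fun y : ℝ => Complex.exp ((κ:ℂ) * (y:ℝ)) * (ψ' y - (κ:ℂ) * ψ y)) 0
      (Set.Icc 0 d) x := by
    intro x hx
    have h1 := (hexp1 κ x).hasDerivWithinAt (s := Set.Icc (0:ℝ) d)
    have h2 := (hder2 x hx).sub ((hder1 x hx).const_mul (κ:ℂ))
    have := h1.mul h2
    refine this.congr_deriv ?_
    rw [hode x hx]
    simp only [Pi.sub_apply]
    ring
  have hgc := const_aux hg
  have hfc := const_aux hf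
  set p : ℂ := ψ' 0 + (κ:ℂ) * ψ 0 with hp_def
  set q : ℂ := ψ' 0 - (κ:ℂ) * ψ 0 with hq_def
  have hgc' : ∀ x ∈ Set.Icc (0:ℝ) d,
      Complex.exp (((-κ:ℝ):ℂ) * (x:ℝ)) * (ψ' x + (κ:ℂ) * ψ x) = p := by
    intro x hx
    have := hgc x hx
    simpa using this
  have hfc' : ∀ x ∈ Set.Icc (0:ℝ) d,
      Complex.exp ((κ:ℂ) * (x:ℝ)) * (ψ' x - (κ:ℂ) * ψ x) = q := by
    intro x hx
    have := hfc x hx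
    simpa using this
  set u : ℂ := Complex.exp ((κ:ℂ) * (d:ℝ)) with hu_def
  set v : ℂ := Complex.exp (((-κ:ℝ):ℂ) * (d:ℝ)) with hv_def
  have huv : u * v = 1 := by
    rw [hu_def, hv_def, ← Complex.exp_add,
      show ((κ:ℂ) * (d:ℝ) + ((-κ:ℝ):ℂ) * (d:ℝ)) = 0 by push_cast; ring, Complex.exp_zero]
  set Er : ℝ := Real.exp (κ * d) with hEr_def
  have hu_real : u = (Er : ℂ) := by
    rw [hu_def, hEr_def, Complex.ofReal_exp, Complex.ofReal_mul]
  have hE1 : 1 < Er := by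
    rw [hEr_def]
    have : (0:ℝ) < κ * d := by positivity
    calc (1:ℝ) = Real.exp 0 := Real.exp_zero.symm
    _ < Real.exp (κ * d) := Real.exp_lt_exp.2 this
  have hdmem : d ∈ Set.Icc (0:ℝ) d := ⟨hd.le, le_refl d⟩
  -- relations at d
  have e1 : ψ' d + (κ:ℂ) * ψ d = u * p := by
    have h := hgc' d hdmem
    have h2 : u * (v * (ψ' d + (κ:ℂ) * ψ d)) = u * p := by rw [h]
    rwa [← mul_assoc, huv, one_mul] at h2
  have e2 : ψ' d - (κ:ℂ) * ψ d = v * q := by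
    have h := hfc' d hdmem
    have h2 : v * (u * (ψ' d - (κ:ℂ) * ψ d)) = v * q := by rw [h]
    rwa [← mul_assoc, mul_comm v u, huv, one_mul] at h2
  -- boundary condition equations
  have eq1 : u * p + v * q = p + q := by
    have : ψ' d = ψ' 0 := by rw [hbcd, hbc0]
    rw [hp_def, hq_def]
    linear_combination -e1 - e2 + 2 * this
  have eq2 : (κ:ℂ) * (p + q) = (ω:ℂ) * (u * p - v * q - p + q) := by
    rw [hp_def, hq_def]
    linear_combination (κ:ℂ) * 2 * hbc0 + (ω:ℂ) * e1 - (ω:ℂ) * e2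
  have hune : u - 1 ≠ 0 := by
    rw [hu_real, show ((Er:ℂ) - 1) = ((Er - 1 : ℝ) : ℂ) by push_cast; ring]
    exact_mod_cast Complex.ofReal_ne_zero.2 (by linarith)
  have hq_eq : q = u * p := by
    have h1 : (u - 1) * (u * p - q) = 0 := by linear_combination u * eq1 - q * huv
    have h2 := (mul_eq_zero.1 h1).resolve_left hune
    linear_combination -h2
  rw [hq_eq] at eq2
  have hcpos : 0 < κ * (1 + Er) - 2 * ω * (Er - 1) := by
    have hkey := key_ineq (t := κ * d) (by positivity)
    have hmul : d * ω * (Er - 1) ≤ Er - 1 :=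
      mul_le_of_le_one_left (by linarith) hω
    nlinarith [hkey]
  have hc : ((κ * (1 + Er) - 2 * ω * (Er - 1) : ℝ) : ℂ) * p = 0 := by
    have : ((κ:ℂ) * (1 + u) - 2 * (ω:ℂ) * (u - 1)) * p = 0 := by
      linear_combination eq2 - (ω:ℂ) * p * huv
    rw [hu_real] at this
    convert this using 2
    push_cast
    ring
  have hp0 : p = 0 := by
    have := (mul_eq_zero.1 hc).resolve_left
      (Complex.ofReal_ne_zero.2 (ne_of_gt hcpos))
    exact this
  have hq0 : q = 0 := by rw [hq_eq, hp0, mul_zero]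
  intro x hx
  have hgx := hgc' x hx
  have hfx := hfc' x hx
  rw [hp0] at hgx
  rw [hq0] at hfx
  have hg0 : ψ' x + (κ:ℂ) * ψ x = 0 :=
    (mul_eq_zero.1 hgx).resolve_left (Complex.exp_ne_zero _)
  have hf0 : ψ' x - (κ:ℂ) * ψ x = 0 :=
    (mul_eq_zero.1 hfx).resolve_left (Complex.exp_ne_zero _)
  have hk : ((2 * κ : ℝ) : ℂ) * ψ x = 0 := by push_cast; linear_combination hg0 - hf0
  have := (mul_eq_zero.1 hk).resolve_left
    (Complex.ofReal_ne_zero.2 (by positivity))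
  exact this
end

section
/- Let d > 0, ω ∈ ℝ, and κ > 0. There exists a pair (A,B) ∈ ℂ² with (A,B) ≠ (0,0) such that the function ψ(x) = A·e^{κx} + B·e^{−κx} satisfies ψ′(0) = ψ′(d) = ω·(ψ(d) − ψ(0)) if and only if (2ω/κ)·(1 − e^{−κd})/(1 + e^{−κd}) = 1. -/
lemma cexp_hasDerivAt (c : ℂ) (x : ℝ) :
    HasDerivAt (fun t : ℝ => Complex.exp (c * t)) (c * Complex.exp (c * x)) x := by
  have h1 : HasDerivAt (fun t : ℝ => (t : ℂ)) 1 x := by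
    simpa using (hasDerivAt_id x).ofReal_comp
  have h2 : HasDerivAt (fun t : ℝ => c * (t : ℂ)) c x := by
    simpa using h1.const_mul c
  simpa [mul_comm] using h2.cexp

lemma deriv_psi (A B c : ℂ) (t : ℝ) :
    deriv (fun x : ℝ => A * Complex.exp (c * x) + B * Complex.exp (-(c * x))) t
      = A * c * Complex.exp (c * t) - B * c * Complex.exp (-(c * t)) := by
  have h1 := (cexp_hasDerivAt c t).const_mul A
  have h2 : HasDerivAt (fun x : ℝ => Complex.exp (-(c * x))) (-(c * Complex.exp (-(c * t)))) t := by
    have := cexp_hasDerivAt (-c) t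
    simpa [neg_mul] using this
  have h3 := h2.const_mul B
  have := (h1.add h3).deriv
  rw [show (fun x : ℝ => A * Complex.exp (c * x) + B * Complex.exp (-(c * x))) = ((fun y : ℝ => A * Complex.exp (c * y)) + fun y : ℝ => B * Complex.exp (-(c * y))) from rfl, this]; ring

/-- For d > 0, ω ∈ ℝ, κ > 0: there exists a nontrivial pair (A,B) ∈ ℂ² such that
ψ(x) = A·e^{κx} + B·e^{−κx} satisfies ψ′(0) = ψ′(d) = ω·(ψ(d) − ψ(0)) if and only if
(2ω/κ)·(1 − e^{−κd})/(1 + e^{−κd}) = 1. -/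
theorem stmt_2 (d ω κ : ℝ) (hd : 0 < d) (hκ : 0 < κ) :
    (∃ A B : ℂ, (A, B) ≠ (0, 0) ∧
      deriv (fun x : ℝ => A * Complex.exp ((κ : ℂ) * x) + B * Complex.exp (-((κ : ℂ) * x))) 0
        = deriv (fun x : ℝ => A * Complex.exp ((κ : ℂ) * x) + B * Complex.exp (-((κ : ℂ) * x))) d ∧
      deriv (fun x : ℝ => A * Complex.exp ((κ : ℂ) * x) + B * Complex.exp (-((κ : ℂ) * x))) d
        = (ω : ℂ) * ((A * Complex.exp ((κ : ℂ) * d) + B * Complex.exp (-((κ : ℂ) * d)))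
            - (A * Complex.exp ((κ : ℂ) * 0) + B * Complex.exp (-((κ : ℂ) * 0)))))
    ↔ (2 * ω / κ) * ((1 - Real.exp (-(κ * d))) / (1 + Real.exp (-(κ * d)))) = 1 := by
  set e : ℝ := Real.exp (-(κ * d)) with he
  have he0 : 0 < e := Real.exp_pos _
  have he1 : e < 1 := by
    rw [he, Real.exp_lt_one_iff]
    nlinarith
  set E : ℂ := Complex.exp ((κ : ℂ) * d) with hE
  have hE' : Complex.exp (-((κ : ℂ) * d)) = (e : ℂ) := by
    rw [he, Complex.ofReal_exp]
    push_cast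
    ring_nf
  have hEe : E * (e : ℂ) = 1 := by
    rw [hE, ← hE', ← Complex.exp_add]
    simp
  have hene : (1 : ℝ) + e ≠ 0 := by positivity
  have hκC : (κ : ℂ) ≠ 0 := by exact_mod_cast hκ.ne'
  have heC0 : (e : ℂ) ≠ 0 := by exact_mod_cast he0.ne'
  have heC1 : (e : ℂ) ≠ 1 := by exact_mod_cast he1.ne
  -- the real condition is equivalent to 2ω(1−e) = κ(1+e)
  have hreal : ((2 * ω / κ) * ((1 - e) / (1 + e)) = 1) ↔ 2 * ω * (1 - e) = κ * (1 + e) := by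
    rw [div_mul_div_comm, div_eq_one_iff_eq (by positivity)]
  constructor
  · rintro ⟨A, B, hAB, h1, h2⟩
    rw [deriv_psi, deriv_psi] at h1
    rw [deriv_psi] at h2
    simp only [Complex.ofReal_zero, mul_zero, neg_zero, Complex.exp_zero, mul_one] at h1 h2
    rw [hE', ← hE] at h1 h2
    -- h1 : A*κ - B*κ = A*κ*E - B*κ*e
    -- derive A = -e*B
    have hA : A = -(e : ℂ) * B := by
      have hEne1 : E ≠ 1 := by
        intro h
        rw [h, one_mul] at hEe
        exact heC1 hEe
      have key : (1 - E) * (A + (e : ℂ) * B) = 0 := by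
        have key' : (κ : ℂ) * ((1 - E) * (A + (e : ℂ) * B)) = 0 := by
          linear_combination h1 - B * (κ : ℂ) * hEe
        rcases mul_eq_zero.1 key' with h | h
        · exact absurd h hκC
        · exact h
      rcases mul_eq_zero.1 key with h | h
      · exact absurd (by linear_combination -h) hEne1
      · linear_combination h
    have hB : B ≠ 0 := by
      intro hB0
      apply hAB
      simp [hA, hB0]
    -- plug into h2
    have hcond : (κ : ℂ) * (1 + (e : ℂ)) = 2 * ω * (1 - (e : ℂ)) := by
      have h2' : -(B * (κ : ℂ) * (1 + e)) = -(2 * ω * B * (1 - e)) := by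
        rw [hA] at h2
        linear_combination h2 + (B * (κ : ℂ) - B * (ω : ℂ)) * hEe
      exact mul_left_cancel₀ hB (by linear_combination -h2' :
        B * ((κ : ℂ) * (1 + (e:ℂ))) = B * (2 * ω * (1 - (e:ℂ))))
    have hcr : κ * (1 + e) = 2 * ω * (1 - e) := by exact_mod_cast hcond
    rw [hreal]; linarith
  · intro hr
    rw [hreal] at hr
    refine ⟨-(e : ℂ), 1, ?_, ?_, ?_⟩
    · simp [heC0]
    · rw [deriv_psi, deriv_psi]
      simp only [Complex.ofReal_zero, mul_zero, neg_zero, Complex.exp_zero, mul_one]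
      rw [hE', ← hE]
      linear_combination (κ : ℂ) * hEe
    · rw [deriv_psi]
      simp only [Complex.ofReal_zero, mul_zero, neg_zero, Complex.exp_zero, mul_one]
      rw [hE', ← hE]
      have hrc : (2 * ω * (1 - e) : ℂ) = (κ * (1 + e) : ℂ) := by exact_mod_cast hr
      push_cast at hrc ⊢
      linear_combination ((ω:ℂ) - (κ:ℂ)) * hEe + hrc
end

section
/- Let M(z) = (az+b)/(cz+d) with a,b,c,d ∈ ℂ and ad − bc ≠ 0 be a linear fractional transformation. Let Λ ⊂ ℂ be a compact set of two-dimensional Lebesgue measure zero such that neither the value M(∞) (when c ≠ 0, the point a/c) nor the pole M⁻¹(∞) (when c ≠ 0, the point −d/c) belongs to Λ. Let u : ℂ → ℂ, viewed as a map of two real variables, be differentiable at every point of ℂ ∖ Λ, and set v := u ∘ M (defined off the pole of M). Then ∫_{ℂ} (|∂₁v|² + |∂₂v|²) dx = ∫_{ℂ} (|∂₁u|² + |∂₂u|²) dx, as Lebesgue integrals of nonnegative measurable functions with values in [0,+∞] (the integrands being defined off the respective Lebesgue-null sets of non-differentiability). -/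
open MeasureTheory

private lemma lft_hasDerivAt (p q r t x : ℂ) (hx : r * x + t ≠ 0) :
    HasDerivAt (fun z => (p * z + q) / (r * z + t)) ((p * t - q * r) / (r * x + t) ^ 2) x := by
  have h1 : HasDerivAt (fun z : ℂ => p * z + q) p x := by
    simpa using ((hasDerivAt_id x).const_mul p).add_const q
  have h2 : HasDerivAt (fun z : ℂ => r * z + t) r x := by
    simpa using ((hasDerivAt_id x).const_mul r).add_const t
  have h := h1.div h2 hx
  exact h.congr_deriv (by ring)

private lemma lft_hasFDerivAt (p q r t x : ℂ) (hx : r * x + t ≠ 0) :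
    HasFDerivAt (fun z => (p * z + q) / (r * z + t))
      ((((p * t - q * r) / (r * x + t) ^ 2) : ℂ) • (1 : ℂ →L[ℝ] ℂ)) x := by
  have h := (lft_hasDerivAt p q r t x hx).hasFDerivAt.restrictScalars ℝ
  refine h.congr_fderiv ?_
  ext v
  simp [mul_comm]

private lemma det_smul_one (m : ℂ) :
    ((m • (1 : ℂ →L[ℝ] ℂ)).det) = Complex.normSq m := by
  have h : ((m • (1 : ℂ →L[ℝ] ℂ)) : ℂ →ₗ[ℝ] ℂ) = Algebra.lmul ℝ ℂ m := by
    ext v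
    simp
  rw [ContinuousLinearMap.det, ContinuousLinearMap.coe_smul]
  erw [h]
  rw [← Algebra.norm_apply, Algebra.norm_complex_apply]

private lemma dirichlet_mul (A : ℂ →L[ℝ] ℂ) (m : ℂ) :
    ‖A (m * 1)‖ ^ 2 + ‖A (m * Complex.I)‖ ^ 2
      = Complex.normSq m * (‖A 1‖ ^ 2 + ‖A Complex.I‖ ^ 2) := by
  have e1 : m * 1 = m.re • (1 : ℂ) + m.im • Complex.I := by
    simp only [Complex.real_smul, mul_one]
    exact (Complex.re_add_im m).symm
  have e2 : m * Complex.I = (-m.im) • (1 : ℂ) + m.re • Complex.I := by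
    simp only [Complex.real_smul]
    rw [Complex.ext_iff]
    simp
  have nsq : ∀ z : ℂ, ‖z‖ ^ 2 = z.re ^ 2 + z.im ^ 2 := fun z => by
    rw [Complex.sq_norm, Complex.normSq_apply]; ring
  rw [e1, e2, map_add, map_add, A.map_smul, A.map_smul, A.map_smul, A.map_smul]
  rw [nsq, nsq, nsq, nsq, Complex.normSq_apply]
  simp only [Complex.real_smul, Complex.add_re, Complex.add_im, Complex.mul_re, Complex.mul_im,
    Complex.ofReal_re, Complex.ofReal_im]
  ring

/-- Conformal invariance of the Dirichlet integral under an LFT M(z) = (az+b)/(cz+d)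
(ad − bc ≠ 0): if Λ ⊂ ℂ is a compact Lebesgue-null set avoiding the value M(∞) and the
pole M⁻¹(∞) (which exist only when c ≠ 0), and u : ℂ → ℂ is (real-)differentiable off Λ,
then ∫_ℂ (|∂₁(u∘M)|² + |∂₂(u∘M)|²) = ∫_ℂ (|∂₁u|² + |∂₂u|²) as Lebesgue integrals with
values in [0,+∞]. -/
theorem stmt_6 (a b c d : ℂ) (hdet : a * d - b * c ≠ 0)
    (M : ℂ → ℂ) (hM : ∀ z, M z = (a * z + b) / (c * z + d))
    (Λ : Set ℂ) (hcomp : IsCompact Λ) (hnull : volume Λ = 0)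
    (havoid : c ≠ 0 → a / c ∉ Λ ∧ -d / c ∉ Λ)
    (u : ℂ → ℂ) (hu : ∀ z ∉ Λ, DifferentiableAt ℝ u z) :
    (∫⁻ x, ENNReal.ofReal
        (‖fderiv ℝ (fun z => u (M z)) x 1‖ ^ 2
          + ‖fderiv ℝ (fun z => u (M z)) x Complex.I‖ ^ 2))
      = ∫⁻ x, ENNReal.ofReal
          (‖fderiv ℝ u x 1‖ ^ 2 + ‖fderiv ℝ u x Complex.I‖ ^ 2) := by
  have hMeq : M = fun z => (a * z + b) / (c * z + d) := funext hM
  subst hMeq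
  set w : ℂ := a * d - b * c with hw
  set M : ℂ → ℂ := fun z => (a * z + b) / (c * z + d) with hMdef
  set N : ℂ → ℂ := fun y => (d * y + -b) / (-c * y + a) with hNdef
  set g : ℂ → ENNReal := fun y =>
    ENNReal.ofReal (‖fderiv ℝ u y 1‖ ^ 2 + ‖fderiv ℝ u y Complex.I‖ ^ 2) with hgdef
  set F : ℂ → ENNReal := fun x =>
    ENNReal.ofReal (‖fderiv ℝ (fun z => u (M z)) x 1‖ ^ 2
      + ‖fderiv ℝ (fun z => u (M z)) x Complex.I‖ ^ 2) with hFdef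
  -- basic nonvanishing facts
  have ha0 : c = 0 → a ≠ 0 := by
    intro hc ha; exact hdet (by rw [hw, hc, ha]; ring)
  have hd0 : c = 0 → d ≠ 0 := by
    intro hc hd; exact hdet (by rw [hw, hc, hd]; ring)
  -- the denominator of N does not vanish on Λ
  have hΛden : ∀ y ∈ Λ, -c * y + a ≠ 0 := by
    intro y hy h0
    rcases eq_or_ne c 0 with hc | hc
    · exact ha0 hc (by simpa [hc] using h0)
    · have : y = a / c := by field_simp; linear_combination -h0
      exact (havoid hc).1 (this ▸ hy)
  -- the set where the denominator of M vanishes is null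
  have hUc : volume {z : ℂ | c * z + d = 0} = 0 := by
    rcases eq_or_ne c 0 with hc | hc
    · have he : {z : ℂ | c * z + d = 0} = ∅ := by
        ext z; simp [hc, hd0 hc]
      rw [he]; simp
    · refine measure_mono_null (fun z hz => ?_) (measure_singleton (-d / c))
      simp only [Set.mem_setOf_eq] at hz
      have : z = -d / c := by field_simp; linear_combination hz
      simp [this]
  -- N maps Λ to a null set
  have hNnull : volume (N '' Λ) = 0 := by
    have hle := addHaar_image_le_lintegral_abs_det_fderiv (f := N)
      (f' := fun y => (((d * a - -b * -c) / (-c * y + a) ^ 2 : ℂ)) • (1 : ℂ →L[ℝ] ℂ))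
      volume hcomp.measurableSet
      (fun y hy => (lft_hasFDerivAt d (-b) (-c) a y (hΛden y hy)).hasFDerivWithinAt)
    rw [setLIntegral_measure_zero _ _ hnull] at hle
    exact le_antisymm hle zero_le
  -- the good set s
  set s : Set ℂ := {z | c * z + d ≠ 0} ∩ M ⁻¹' Λᶜ with hsdef
  have hUopen : IsOpen {z : ℂ | c * z + d ≠ 0} := by
    have : {z : ℂ | c * z + d ≠ 0} = (fun z => c * z + d) ⁻¹' {0}ᶜ := rfl
    rw [this]
    exact (isOpen_compl_singleton).preimage (by continuity)
  have hMcont : ContinuousOn M {z : ℂ | c * z + d ≠ 0} := by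
    apply ContinuousOn.div
    · exact (Continuous.continuousOn (by continuity))
    · exact (Continuous.continuousOn (by continuity))
    · exact fun x hx => hx
  have hsopen : IsOpen s := hMcont.isOpen_inter_preimage hUopen hcomp.isClosed.isOpen_compl
  -- complement of s is null
  have hscompl : volume sᶜ = 0 := by
    have hsub : sᶜ ⊆ {z : ℂ | c * z + d = 0} ∪ N '' Λ := by
      intro x hx
      rcases eq_or_ne (c * x + d) 0 with h0 | h0
      · exact Or.inl h0
      · right
        have hxΛ : M x ∈ Λ := by
          by_contra hxn
          exact hx ⟨h0, hxn⟩
        refine ⟨M x, hxΛ, ?_⟩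
        have hden2 : -c * M x + a ≠ 0 := hΛden _ hxΛ
        have hval : -c * M x + a = w / (c * x + d) := by
          rw [hMdef, hw]
          simp only
          rw [eq_div_iff h0]
          linear_combination (-c) * div_mul_cancel₀ (a * x + b) h0
        rw [hNdef]
        simp only
        rw [div_eq_iff hden2, hval, hMdef]
        simp only
        rw [hw]
        have h0' : x * c + d ≠ 0 := by rwa [mul_comm]
        field_simp
        ring
    exact measure_mono_null hsub (measure_union_null hUc hNnull)
  -- a.e. equal to univ
  have hsae : s =ᵐ[volume] Set.univ := MeasureTheory.ae_eq_univ.mpr hscompl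
  -- derivative of M within s
  have hf' : ∀ x ∈ s, HasFDerivWithinAt M
      ((((a * d - b * c) / (c * x + d) ^ 2 : ℂ)) • (1 : ℂ →L[ℝ] ℂ)) s x :=
    fun x hx => (lft_hasFDerivAt a b c d x hx.1).hasFDerivWithinAt
  -- injectivity on s
  have hinj : Set.InjOn M s := by
    intro x hx y hy hxy
    rw [hMdef] at hxy
    simp only at hxy
    rw [div_eq_div_iff hx.1 hy.1] at hxy
    have hww : w * x = w * y := by rw [hw]; linear_combination hxy
    exact mul_left_cancel₀ hdet hww
  -- pointwise identity on s
  have hpt : ∀ x ∈ s, F x = ENNReal.ofReal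
      |((((a * d - b * c) / (c * x + d) ^ 2 : ℂ)) • (1 : ℂ →L[ℝ] ℂ)).det| * g (M x) := by
    intro x hx
    set m : ℂ := (a * d - b * c) / (c * x + d) ^ 2 with hm
    have hdM : HasFDerivAt M (m • (1 : ℂ →L[ℝ] ℂ)) x := lft_hasFDerivAt a b c d x hx.1
    have huM : DifferentiableAt ℝ u (M x) := hu _ hx.2
    have hchain : HasFDerivAt (fun z => u (M z))
        ((fderiv ℝ u (M x)).comp (m • (1 : ℂ →L[ℝ] ℂ))) x := huM.hasFDerivAt.comp x hdM
    rw [hFdef]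
    simp only
    rw [hchain.fderiv, det_smul_one, abs_of_nonneg (Complex.normSq_nonneg m)]
    have h1 : ((fderiv ℝ u (M x)).comp (m • (1 : ℂ →L[ℝ] ℂ))) 1
        = fderiv ℝ u (M x) (m * 1) := by simp
    have hI : ((fderiv ℝ u (M x)).comp (m • (1 : ℂ →L[ℝ] ℂ))) Complex.I
        = fderiv ℝ u (M x) (m * Complex.I) := by simp
    rw [h1, hI, dirichlet_mul, ENNReal.ofReal_mul (Complex.normSq_nonneg m)]
  -- complement of the image is null
  have himgc : volume (M '' s)ᶜ = 0 := by
    have hVnull : volume {y : ℂ | -c * y + a = 0} = 0 := by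
      rcases eq_or_ne c 0 with hc | hc
      · have he : {y : ℂ | -c * y + a = 0} = ∅ := by
          ext y; simp [hc, ha0 hc]
        rw [he]; simp
      · refine measure_mono_null (fun y hy => ?_) (measure_singleton (a / c))
        simp only [Set.mem_setOf_eq] at hy
        have : y = a / c := by field_simp; linear_combination -hy
        simp [this]
    refine measure_mono_null (fun y hy => ?_) (measure_union_null hnull hVnull)
    by_contra hcon
    simp only [Set.mem_union, Set.mem_setOf_eq] at hcon
    push_neg at hcon
    obtain ⟨hyΛ, hyden⟩ := hcon
    have hden : c * N y + d = w / (-c * y + a) := by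
      rw [hNdef, hw]
      simp only
      rw [eq_div_iff hyden]
      linear_combination c * div_mul_cancel₀ (d * y + -b) hyden
    have hdenne : c * N y + d ≠ 0 := by
      rw [hden]; exact div_ne_zero hdet hyden
    have hMNy : M (N y) = y := by
      rw [hMdef]
      simp only
      rw [div_eq_iff hdenne, hden, hw, hNdef]
      simp only
      rw [← mul_div_assoc, ← mul_div_assoc, div_add' _ _ _ hyden, div_eq_div_iff hyden hyden]
      ring
    exact hy ⟨N y, ⟨hdenne, by simp [Set.mem_preimage, hMNy, hyΛ]⟩, hMNy⟩
  have himgae : M '' s =ᵐ[volume] Set.univ := MeasureTheory.ae_eq_univ.mpr himgc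
  calc ∫⁻ x, F x = ∫⁻ x in s, F x := by
        rw [← setLIntegral_univ]
        exact (setLIntegral_congr hsae).symm
    _ = ∫⁻ x in s, ENNReal.ofReal
          |((((a * d - b * c) / (c * x + d) ^ 2 : ℂ)) • (1 : ℂ →L[ℝ] ℂ)).det| * g (M x) :=
        setLIntegral_congr_fun hsopen.measurableSet hpt
    _ = ∫⁻ y in M '' s, g y :=
        (lintegral_image_eq_lintegral_abs_det_fderiv_mul volume hsopen.measurableSet hf' hinj g).symm
    _ = ∫⁻ y, g y := by rw [setLIntegral_congr himgae, setLIntegral_univ]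
end
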